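/- Let k₁₂ ≥ 1 be real, let s₁, s₂, p₁, p₂ be real with s₁ ≠ 0. Then the complex-valued function t ↦ (1-t)^{-i p₁ - i s₁ - 1/2} · t^{-i p₂ + i s₂ - 1/2} · ₂F₁(k₁₂-i s₁+i s₂, 1-k₁₂-i s₁+i s₂; 1+2i s₂; t) is integrable with respect to Lebesgue measure on the interval (0,1). (Convergence of the integral I₁(C,C,+) for the coupling of two continuous series to a positive discrete series; the integrand diverges only like t^{-1/2} at t = 0 and like (1-t)^{-1/2} at t = 1.) -/

import Mathlib

open Complex Filter Set MeasureTheory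

noncomputable def hypTerm (a b c z : ℂ) (n : ℕ) : ℂ :=
  (ascPochhammer ℂ n).eval a * (ascPochhammer ℂ n).eval b /
    ((ascPochhammer ℂ n).eval c * (n.factorial : ℂ)) * z ^ n

noncomputable def hyp (a b c z : ℂ) : ℂ := ∑' n, hypTerm a b c z n

noncomputable def hypQ (a b c : ℂ) (n : ℕ) : ℝ :=
  ‖(ascPochhammer ℂ n).eval a‖ * ‖(ascPochhammer ℂ n).eval b‖ /
    (‖(ascPochhammer ℂ n).eval c‖ * (n.factorial : ℝ))

lemma hypQ_nonneg (a b c : ℂ) (n : ℕ) : 0 ≤ hypQ a b c n := by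
  unfold hypQ; positivity

lemma norm_hypTerm (a b c : ℂ) {t : ℝ} (ht : 0 ≤ t) (n : ℕ) :
    ‖hypTerm a b c t n‖ = hypQ a b c n * t ^ n := by
  unfold hypTerm hypQ
  rw [norm_mul, norm_div, norm_mul, norm_mul, norm_pow, Complex.norm_real,
    Real.norm_of_nonneg ht]
  norm_num

lemma norm_asc_eval_ge (c : ℂ) (hc : 1 ≤ c.re) (n : ℕ) :
    (n.factorial : ℝ) ≤ ‖(ascPochhammer ℂ n).eval c‖ := by
  induction n with
  | zero => simp
  | succ n ih =>
    rw [ascPochhammer_succ_right, Polynomial.eval_mul, norm_mul]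
    have h1 : (n + 1 : ℝ) ≤ ‖(Polynomial.X + (n : Polynomial ℂ)).eval c‖ := by
      simp only [Polynomial.eval_add, Polynomial.eval_X, Polynomial.eval_natCast]
      calc (n + 1 : ℝ) ≤ (c + n).re := by simp; linarith
        _ ≤ ‖c + n‖ := Complex.re_le_norm _
    calc ((n+1).factorial : ℝ) = (n.factorial : ℝ) * (n+1) := by
          rw [Nat.factorial_succ]; push_cast; ring
      _ ≤ ‖(ascPochhammer ℂ n).eval c‖ * ‖(Polynomial.X + (n : Polynomial ℂ)).eval c‖ := by
          exact mul_le_mul ih h1 (by positivity) (norm_nonneg _)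
    exact le_refl _

lemma hypQ_succ (a b c : ℂ) (hc : 1 ≤ c.re) (n : ℕ) :
    hypQ a b c (n + 1)
      = hypQ a b c n * (‖a + n‖ * ‖b + n‖ / (‖c + n‖ * (n + 1))) := by
  have hpc : ‖(ascPochhammer ℂ n).eval c‖ ≠ 0 := by
    have := norm_asc_eval_ge c hc n
    have : (0:ℝ) < ‖(ascPochhammer ℂ n).eval c‖ :=
      lt_of_lt_of_le (by positivity) this
    positivity
  have hcn : ‖c + (n:ℂ)‖ ≠ 0 := by
    have h1 : (n + 1 : ℝ) ≤ ‖c + n‖ := by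
      calc (n + 1 : ℝ) ≤ (c + n).re := by simp; linarith
        _ ≤ ‖c + n‖ := Complex.re_le_norm _
    have : (0:ℝ) < ‖c + n‖ := lt_of_lt_of_le (by positivity) h1
    exact ne_of_gt this
  unfold hypQ
  rw [ascPochhammer_succ_right]
  simp only [Polynomial.eval_mul, Polynomial.eval_add, Polynomial.eval_X,
    Polynomial.eval_natCast, norm_mul, Nat.factorial_succ]
  have hfa : ((n.factorial : ℝ)) ≠ 0 := Nat.cast_ne_zero.mpr n.factorial_ne_zero
  push_cast
  field_simp

lemma hypQ_decay (a b c : ℂ) (hab : a.re + b.re = 1) (hiab : a.im = b.im)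
    (hc : c.re = 1) :
    ∃ C : ℝ, 0 ≤ C ∧ ∀ n : ℕ, hypQ a b c n ≤ C / (n + 1) := by
  set M : ℝ := (a.re ^ 2 + b.re ^ 2) / 2 + a.im ^ 2 with hM
  have hM0 : 0 ≤ M := by positivity
  set s : ℝ := M + 1 with hs
  set K₀ : ℕ := ⌈M ^ 2 + M⌉₊ with hK₀
  have hKge : (M ^ 2 + M : ℝ) ≤ K₀ := Nat.le_ceil _
  -- ratio bound
  have hratio : ∀ n : ℕ, K₀ ≤ n →
      ‖a + n‖ * ‖b + n‖ / (‖c + n‖ * (n + 1)) ≤ (n + s) / (n + s + 1) := by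
    intro n hn
    have hnM : (M ^ 2 + M : ℝ) ≤ n := le_trans hKge (by exact_mod_cast hn)
    have hub : ‖a + n‖ * ‖b + n‖ ≤ (n:ℝ) ^ 2 + n + M := by
      have h1 : ‖a + (n:ℂ)‖ ^ 2 = (a.re + n) ^ 2 + a.im ^ 2 := by
        rw [Complex.sq_norm, Complex.normSq_apply]
        simp; ring
      have h2 : ‖b + (n:ℂ)‖ ^ 2 = (b.re + n) ^ 2 + b.im ^ 2 := by
        rw [Complex.sq_norm, Complex.normSq_apply]
        simp; ring
      have h3 : ‖a + (n:ℂ)‖ * ‖b + (n:ℂ)‖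
          ≤ (‖a + (n:ℂ)‖ ^ 2 + ‖b + (n:ℂ)‖ ^ 2) / 2 := by
        nlinarith [sq_nonneg (‖a + (n:ℂ)‖ - ‖b + (n:ℂ)‖)]
      rw [h1, h2] at h3
      calc ‖a + (n:ℂ)‖ * ‖b + (n:ℂ)‖
          ≤ ((a.re + n) ^ 2 + a.im ^ 2 + ((b.re + n) ^ 2 + b.im ^ 2)) / 2 := h3
        _ = (n:ℝ) ^ 2 + n + M := by rw [hM, ← hiab]; nlinarith [hab]
    have hlb : (n + 1 : ℝ) ≤ ‖c + n‖ := by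
      calc (n + 1 : ℝ) ≤ (c + n).re := by simp [hc]; linarith
        _ ≤ ‖c + n‖ := Complex.re_le_norm _
    have hn1 : (0:ℝ) < n + 1 := by positivity
    have hcn : (0:ℝ) < ‖c + n‖ := lt_of_lt_of_le hn1 hlb
    have step1 : ‖a + n‖ * ‖b + n‖ / (‖c + n‖ * (n + 1))
        ≤ ((n:ℝ) ^ 2 + n + M) / ((n + 1) * (n + 1)) := by
      apply div_le_div₀ (by positivity) hub (by positivity)
      exact mul_le_mul_of_nonneg_right hlb (le_of_lt hn1)
    refine le_trans step1 ?_
    rw [div_le_div_iff₀ (by positivity) (by positivity), hs]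
    have hkey : ((n:ℝ)^2 + n + M) * ((n:ℝ) + (M+1) + 1)
        = ((n:ℝ) + (M+1)) * (((n:ℝ) + 1) * ((n:ℝ) + 1)) + (M^2 + M - 1 - (n:ℝ)) := by
      ring
    linarith [hkey, hnM]
  -- antitone
  have hc1 : 1 ≤ c.re := le_of_eq hc.symm
  have hanti : ∀ n : ℕ, K₀ ≤ n →
      hypQ a b c n * (n + s) ≤ hypQ a b c K₀ * (K₀ + s) := by
    intro n hn
    induction n, hn using Nat.le_induction with
    | base => exact le_refl _
    | succ n hn ih =>
      rw [hypQ_succ a b c hc1 n]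
      have hr := hratio n hn
      have hq := hypQ_nonneg a b c n
      have hss : (0:ℝ) < (n:ℝ) + s + 1 := by positivity
      calc hypQ a b c n * (‖a + n‖ * ‖b + n‖ / (‖c + n‖ * (n + 1))) * (↑(n+1) + s)
          ≤ hypQ a b c n * ((n + s) / (n + s + 1)) * (↑(n+1) + s) := by
            apply mul_le_mul_of_nonneg_right (mul_le_mul_of_nonneg_left hr hq)
            push_cast; positivity
        _ = hypQ a b c n * (n + s) := by
            push_cast
            rw [show ((n:ℝ)+1+s) = ((n:ℝ)+s+1) by ring, mul_assoc,
              div_mul_cancel₀ _ (ne_of_gt hss)]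
        _ ≤ hypQ a b c K₀ * (K₀ + s) := ih
  clear_value K₀
  refine ⟨(∑ m ∈ Finset.range K₀, hypQ a b c m * (m + 1))
    + hypQ a b c K₀ * (K₀ + s), ?_, ?_⟩
  · have : 0 ≤ ∑ m ∈ Finset.range K₀, hypQ a b c m * (m + 1) :=
      Finset.sum_nonneg fun m _ => by have := hypQ_nonneg a b c m; positivity
    have h2 : 0 ≤ hypQ a b c K₀ * ((K₀:ℝ) + s) := by
      have := hypQ_nonneg a b c K₀; positivity
    linarith
  · intro n
    have hsum0 : 0 ≤ ∑ m ∈ Finset.range K₀, hypQ a b c m * (m + 1) :=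
      Finset.sum_nonneg fun m _ => by have := hypQ_nonneg a b c m; positivity
    have hK0 : 0 ≤ hypQ a b c K₀ * ((K₀:ℝ) + s) := by
      have := hypQ_nonneg a b c K₀; positivity
    rw [le_div_iff₀ (by positivity : (0:ℝ) < (n:ℝ) + 1)]
    rcases lt_or_ge n K₀ with h | h
    · have hmem : hypQ a b c n * (n + 1)
          ≤ ∑ m ∈ Finset.range K₀, hypQ a b c m * (m + 1) := by
        apply Finset.single_le_sum (f := fun m => hypQ a b c m * ((m:ℝ) + 1))
          (fun m _ => by have := hypQ_nonneg a b c m; positivity) (Finset.mem_range.mpr h)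
      linarith
    · have h1 : hypQ a b c n * ((n:ℝ) + 1) ≤ hypQ a b c n * (n + s) := by
        apply mul_le_mul_of_nonneg_left _ (hypQ_nonneg a b c n)
        rw [hs]; linarith
      have := hanti n h
      linarith


theorem integral_CCP_I1_integrable (k₁₂ s₁ s₂ p₁ p₂ : ℝ)
    (h12 : 1 ≤ k₁₂) (hs₁ : s₁ ≠ 0) :
    IntegrableOn (fun t : ℝ =>
        ((1 - t : ℝ) : ℂ) ^ (-(I * (p₁ : ℂ)) - I * (s₁ : ℂ) - 1 / 2) *
          ((t : ℝ) : ℂ) ^ (-(I * (p₂ : ℂ)) + I * (s₂ : ℂ) - 1 / 2) *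
          hyp ((k₁₂ : ℂ) - I * (s₁ : ℂ) + I * (s₂ : ℂ))
            (1 - k₁₂ - I * (s₁ : ℂ) + I * (s₂ : ℂ)) (1 + 2 * I * (s₂ : ℂ)) t)
      (Ioo 0 1) volume := by
  set a : ℂ := (k₁₂ : ℂ) - I * s₁ + I * s₂ with ha_def
  set b : ℂ := 1 - k₁₂ - I * s₁ + I * s₂ with hb_def
  set c : ℂ := 1 + 2 * I * s₂ with hc_def
  set w₁ : ℂ := -(I * (p₁:ℂ)) - I * (s₁:ℂ) - 1/2 with hw₁_def
  set w₂ : ℂ := -(I * (p₂:ℂ)) + I * (s₂:ℂ) - 1/2 with hw₂_def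
  have hab : a.re + b.re = 1 := by simp [ha_def, hb_def]
  have hiab : a.im = b.im := by simp [ha_def, hb_def]
  have hc : c.re = 1 := by simp [hc_def]
  have hw₁re : w₁.re = -(1/2:ℝ) := by simp [hw₁_def]
  have hw₂re : w₂.re = -(1/2:ℝ) := by simp [hw₂_def]
  obtain ⟨C, hC0, hC⟩ := hypQ_decay a b c hab hiab hc
  -- summability of the series for t ∈ (0,1)
  have hsum : ∀ t : ℝ, t ∈ Ioo (0:ℝ) 1 → Summable (fun n => hypTerm a b c t n) := by
    intro t ht
    apply Summable.of_norm
    have hgeo : Summable (fun n : ℕ => C * t ^ n) :=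
      (summable_geometric_of_lt_one ht.1.le ht.2).mul_left C
    refine Summable.of_nonneg_of_le (fun n => norm_nonneg _) (fun n => ?_) hgeo
    rw [norm_hypTerm a b c ht.1.le n]
    have h1 : hypQ a b c n ≤ C := le_trans (hC n)
      (div_le_self hC0 (le_add_of_nonneg_left (by positivity)))
    exact mul_le_mul_of_nonneg_right h1 (pow_nonneg ht.1.le n)
  -- norm bound on the hypergeometric series
  have hnorm : ∀ t : ℝ, t ∈ Ioo (0:ℝ) 1 →
      ‖hyp a b c t‖ ≤ 4 * C * (1 - t) ^ (-(1/4) : ℝ) := by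
    intro t ht
    obtain ⟨ht0, ht1⟩ := ht
    have hu : (0:ℝ) < 1 - t := by linarith
    have hQsum : Summable (fun n : ℕ => hypQ a b c n * t ^ n) := by
      have := (hsum t ⟨ht0, ht1⟩).norm
      refine this.congr fun n => norm_hypTerm a b c ht0.le n
    have hlog : HasSum (fun n : ℕ => C / (n+1) * t ^ n)
        (C / t * (-Real.log (1 - t))) := by
      have h := (Real.hasSum_pow_div_log_of_abs_lt_one
        (by rw [abs_of_pos ht0]; exact ht1)).mul_left (C / t)
      have heq : ∀ n : ℕ, C / t * (t ^ (n+1) / (n+1)) = C / (n+1) * t ^ n := by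
        intro n
        rw [pow_succ]
        field_simp
      simpa only [heq] using h
    have step1 : ‖hyp a b c t‖ ≤ ∑' n : ℕ, hypQ a b c n * t ^ n := by
      have h1 : ‖hyp a b c t‖ ≤ ∑' n : ℕ, ‖hypTerm a b c t n‖ := by
        apply norm_tsum_le_tsum_norm
        exact (hsum t ⟨ht0, ht1⟩).norm
      rwa [tsum_congr (fun n => norm_hypTerm a b c ht0.le n)] at h1
    have step2 : ∑' n : ℕ, hypQ a b c n * t ^ n
        ≤ C / t * (-Real.log (1 - t)) := by
      rw [← hlog.tsum_eq]
      refine Summable.tsum_le_tsum (fun n => ?_) hQsum hlog.summable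
      exact mul_le_mul_of_nonneg_right (hC n) (by positivity)
    have step3 : C / t * (-Real.log (1 - t)) ≤ 4 * C * (1 - t) ^ (-(1/4) : ℝ) := by
      have hrp : (0:ℝ) < (1 - t) ^ (-(1/4) : ℝ) := Real.rpow_pos_of_pos hu _
      have l1 : -Real.log (1 - t) = 4 * Real.log ((1 - t) ^ (-(1/4) : ℝ)) := by
        rw [Real.log_rpow hu]; ring
      have l2 : Real.log ((1 - t) ^ (-(1/4) : ℝ)) ≤ (1 - t) ^ (-(1/4) : ℝ) - 1 :=
        Real.log_le_sub_one_of_pos hrp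
      have l3 : (1 - t) ^ (-(1/4) : ℝ) - 1 ≤ t * (1 - t) ^ (-(1/4) : ℝ) := by
        have e1 : (1 - t) * (1 - t) ^ (-(1/4) : ℝ) = (1 - t) ^ ((3/4) : ℝ) := by
          nth_rewrite 1 [← Real.rpow_one (1 - t)]
          rw [← Real.rpow_add hu]; norm_num
        have e2 : (1 - t) ^ ((3/4) : ℝ) ≤ 1 :=
          Real.rpow_le_one hu.le (by linarith) (by norm_num)
        nlinarith
      calc C / t * (-Real.log (1 - t))
          ≤ C / t * (4 * (t * (1 - t) ^ (-(1/4) : ℝ))) := by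
            apply mul_le_mul_of_nonneg_left _ (by positivity)
            rw [l1]; linarith
        _ = 4 * C * (1 - t) ^ (-(1/4) : ℝ) := by
            field_simp
    calc ‖hyp a b c t‖ ≤ ∑' n : ℕ, hypQ a b c n * t ^ n := step1
      _ ≤ C / t * (-Real.log (1 - t)) := step2
      _ ≤ 4 * C * (1 - t) ^ (-(1/4) : ℝ) := step3
  -- dominating function
  have hD : IntegrableOn
      (fun t : ℝ => 4 * C * (t ^ (-(1/2) : ℝ) * (1 - t) ^ (-(3/4) : ℝ)))
      (Ioo 0 1) volume := by
    have hbeta := Complex.betaIntegral_convergent (u := 1/2) (v := 1/4)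
      (by norm_num) (by norm_num)
    have h2 := hbeta.norm
    rw [intervalIntegrable_iff_integrableOn_Ioo_of_le (by norm_num : (0:ℝ) ≤ 1)] at h2
    have h3 : IntegrableOn (fun t : ℝ => t ^ (-(1/2):ℝ) * (1 - t) ^ (-(3/4):ℝ))
        (Ioo 0 1) volume := by
      refine h2.congr_fun (fun x hx => ?_) measurableSet_Ioo
      beta_reduce
      rw [norm_mul,
        show ((1:ℂ) - (x:ℂ)) = (((1 - x : ℝ)) : ℂ) by push_cast; ring,
        Complex.norm_cpow_eq_rpow_re_of_pos hx.1,
        Complex.norm_cpow_eq_rpow_re_of_pos (by linarith [hx.2] : (0:ℝ) < 1 - x)]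
      norm_num
    exact (h3.const_mul (4 * C))
  rw [IntegrableOn]
  -- measurability
  have hmeas : AEStronglyMeasurable (fun t : ℝ =>
      ((1 - t : ℝ) : ℂ) ^ w₁ * ((t : ℝ) : ℂ) ^ w₂ * hyp a b c t)
      (volume.restrict (Ioo 0 1)) := by
    have hFmeas : ∀ N : ℕ, AEStronglyMeasurable (fun t : ℝ =>
        ((1 - t : ℝ) : ℂ) ^ w₁ * ((t : ℝ) : ℂ) ^ w₂ *
          ∑ n ∈ Finset.range N, hypTerm a b c t n)
        (volume.restrict (Ioo 0 1)) := by
      intro N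
      apply ContinuousOn.aestronglyMeasurable _ measurableSet_Ioo
      intro t ht
      apply ContinuousWithinAt.mul
      apply ContinuousWithinAt.mul
      · apply ContinuousAt.continuousWithinAt
        apply ContinuousAt.cpow
        · exact (Complex.continuous_ofReal.comp
            (continuous_const.sub continuous_id)).continuousAt
        · exact continuousAt_const
        · rw [Complex.mem_slitPlane_iff]
          left
          simpa using by linarith [ht.2]
      · apply ContinuousAt.continuousWithinAt
        apply ContinuousAt.cpow
        · exact Complex.continuous_ofReal.continuousAt
        · exact continuousAt_const
        · rw [Complex.mem_slitPlane_iff]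
          left
          simpa using ht.1
      · apply Continuous.continuousWithinAt
        apply continuous_finset_sum
        intro n _
        unfold hypTerm
        exact continuous_const.mul ((Complex.continuous_ofReal).pow n)
    apply aestronglyMeasurable_of_tendsto_ae atTop hFmeas
    rw [ae_restrict_iff' measurableSet_Ioo]
    refine ae_of_all _ fun t ht => ?_
    exact Tendsto.const_mul _ ((hsum t ht).hasSum.tendsto_sum_nat)
  refine Integrable.mono' hD hmeas ?_
  rw [ae_restrict_iff' measurableSet_Ioo]
  refine ae_of_all _ fun t ht => ?_
  obtain ⟨ht0, ht1⟩ := ht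
  have hu : (0:ℝ) < 1 - t := by linarith
  rw [norm_mul, norm_mul,
    Complex.norm_cpow_eq_rpow_re_of_pos hu, Complex.norm_cpow_eq_rpow_re_of_pos ht0,
    hw₁re, hw₂re]
  calc (1 - t) ^ (-(1/2):ℝ) * t ^ (-(1/2):ℝ) * ‖hyp a b c t‖
      ≤ (1 - t) ^ (-(1/2):ℝ) * t ^ (-(1/2):ℝ) * (4 * C * (1 - t) ^ (-(1/4) : ℝ)) := by
        apply mul_le_mul_of_nonneg_left (hnorm t ⟨ht0, ht1⟩) (by positivity)
    _ = 4 * C * (t ^ (-(1/2):ℝ) * ((1 - t) ^ (-(1/2):ℝ) * (1 - t) ^ (-(1/4):ℝ))) := by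
        ring
    _ = 4 * C * (t ^ (-(1/2):ℝ) * (1 - t) ^ (-(3/4):ℝ)) := by
        rw [← Real.rpow_add hu]
        norm_num
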